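/- arXiv:2509.14121 — 7 statements merged into one kernel-verified Lean document; each statement's English description precedes it below -/
import Mathlib

section
/- Let σ ∈ ℝⁿ with σ ≠ 0, let A be a real n×n matrix and μ > −1 a real number such that yᵀ A y ≥ μ ‖y‖² for all y ∈ ℝⁿ, let d ∈ ℝⁿ with ‖d‖ ≤ ρ for some ρ ≥ 0, let κ > 0, and set k = (κ + ρ)/(1 + μ). Then ⟨σ, −k σ/‖σ‖ − k A (σ/‖σ‖) + d⟩ ≤ −κ ‖σ‖. -/
open Matrix RealInnerProductSpace

/-- Pointwise descent inequality at the heart of Theorem 1: with the sliding-mode gain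
`k = (κ + ρ)/(1 + μ)`, one has `⟨σ, −k σ/‖σ‖ − k A (σ/‖σ‖) + d⟩ ≤ −κ ‖σ‖`. -/
theorem stmt1 {n : ℕ} (σ : EuclideanSpace ℝ (Fin n)) (hσ : σ ≠ 0)
    (A : Matrix (Fin n) (Fin n) ℝ) (μ : ℝ) (hμ : μ > -1)
    (hA : ∀ y : EuclideanSpace ℝ (Fin n), μ * ‖y‖ ^ 2 ≤ y ⬝ᵥ A.mulVec y)
    (d : EuclideanSpace ℝ (Fin n)) (ρ : ℝ) (hρ : 0 ≤ ρ) (hd : ‖d‖ ≤ ρ)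
    (κ : ℝ) (hκ : 0 < κ) (k : ℝ) (hk : k = (κ + ρ) / (1 + μ)) :
    ⟪σ, -(k • (‖σ‖⁻¹ • σ))
        - k • (EuclideanSpace.equiv (Fin n) ℝ).symm (A.mulVec (‖σ‖⁻¹ • σ)) + d⟫
      ≤ -κ * ‖σ‖ := by
  have hs : 0 < ‖σ‖ := norm_pos_iff.mpr hσ
  have hμ' : 0 < 1 + μ := by linarith
  have hk0 : 0 ≤ k := by rw [hk]; positivity
  have hkk : k * (1 + μ) = κ + ρ := by rw [hk]; field_simp
  set u : EuclideanSpace ℝ (Fin n) := ‖σ‖⁻¹ • σ with hu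
  have hunit : ‖u‖ = 1 := by
    rw [hu, norm_smul, norm_inv, norm_norm, inv_mul_cancel₀ hs.ne']
  have h1 : ⟪σ, u⟫ = ‖σ‖ := by
    rw [hu, real_inner_smul_right, real_inner_self_eq_norm_sq]
    field_simp
  have heq : ⟪σ, (EuclideanSpace.equiv (Fin n) ℝ).symm (A.mulVec u)⟫
      = σ ⬝ᵥ A.mulVec u := by
    simp [PiLp.inner_apply, dotProduct, mul_comm]
  have hσeq : (σ : Fin n → ℝ) = ‖σ‖ • (u : Fin n → ℝ) := by
    rw [hu]
    funext i
    simp [mul_inv_cancel₀ hs.ne', ← mul_assoc]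
  have hdot : σ ⬝ᵥ A.mulVec u = ‖σ‖ * (u ⬝ᵥ A.mulVec u) := by
    conv_lhs => rw [hσeq]
    simp [dotProduct, Finset.mul_sum, mul_assoc]
  have h2 : ‖σ‖ * μ ≤ σ ⬝ᵥ A.mulVec u := by
    rw [hdot]
    have := hA u
    rw [hunit] at this
    nlinarith [hs.le]
  have h3 : ⟪σ, d⟫ ≤ ‖σ‖ * ρ :=
    le_trans (real_inner_le_norm σ d) (mul_le_mul_of_nonneg_left hd hs.le)
  rw [inner_add_right, inner_sub_right, inner_neg_right, real_inner_smul_right,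
    real_inner_smul_right, real_inner_smul_right,
    show ‖σ‖⁻¹ • WithLp.ofLp σ = WithLp.ofLp u from rfl, heq, real_inner_self_eq_norm_sq]
  have hss : ‖σ‖⁻¹ * ‖σ‖ ^ 2 = ‖σ‖ := by field_simp
  rw [hss]
  nlinarith [mul_le_mul_of_nonneg_left h2 hk0, hs.le]
end

section
/- Let E be a real inner product space and let h : E → ℝ be differentiable with gradient ∇h. Let v : E → E, and let α > 0, η ≥ 0 be such that ‖∇h(y)‖ ≤ η and ⟨∇h(y), v(y)⟩ ≥ −α h(y) for all y ∈ E. Let β > 0, let x, σ : ℝ → E be differentiable with x′(t) = σ(t) + v(x(t)) for all t ≥ 0, suppose h(x(0)) > 0, set α_c = (‖σ(0)‖² + β)/(2 h(x(0))) and κ = (α/2)‖σ(0)‖ + α_c η, and suppose ⟨σ(t), σ′(t)⟩ ≤ −κ ‖σ(t)‖ for all t ≥ 0. Then h(x(t)) ≥ ‖σ(t)‖²/(2 α_c) ≥ 0 for all t ≥ 0. -/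
open RealInnerProductSpace Real Set

/-- Proposition 1: safe reaching phase. If `v` satisfies the CBF condition
`⟨∇h(y), v(y)⟩ ≥ −α h(y)` with `‖∇h(y)‖ ≤ η`, the trajectory satisfies
`x′ = σ + v(x)`, `h(x(0)) > 0`, and the sliding variable satisfies the descent
inequality with gain `κ = (α/2)‖σ(0)‖ + α_c η`, where
`α_c = (‖σ(0)‖² + β)/(2 h(x(0)))`, then `h(x(t)) ≥ ‖σ(t)‖²/(2 α_c) ≥ 0` for all `t ≥ 0`. -/
theorem stmt5 {E : Type*} [NormedAddCommGroup E] [InnerProductSpace ℝ E]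
    (h : E → ℝ) (gradh : E → E) (hgrad : ∀ y, HasFDerivAt h (innerSL ℝ (gradh y)) y)
    (v : E → E) (α η : ℝ) (hα : 0 < α) (hη : 0 ≤ η)
    (hgradbd : ∀ y, ‖gradh y‖ ≤ η)
    (hCBF : ∀ y, ⟪gradh y, v y⟫ ≥ -α * h y)
    (β : ℝ) (hβ : 0 < β)
    (x σ : ℝ → E) (hx : Differentiable ℝ x) (hσ : Differentiable ℝ σ)
    (hdyn : ∀ t ≥ (0 : ℝ), deriv x t = σ t + v (x t))
    (h0 : h (x 0) > 0)
    (αc κ : ℝ) (hαc : αc = (‖σ 0‖ ^ 2 + β) / (2 * h (x 0)))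
    (hκ : κ = α / 2 * ‖σ 0‖ + αc * η)
    (hdesc : ∀ t ≥ (0 : ℝ), ⟪σ t, deriv σ t⟫ ≤ -κ * ‖σ t‖) :
    ∀ t ≥ (0 : ℝ), h (x t) ≥ ‖σ t‖ ^ 2 / (2 * αc) ∧ ‖σ t‖ ^ 2 / (2 * αc) ≥ 0 := by
  have hσ0β : (0:ℝ) < ‖σ 0‖^2 + β := by positivity
  have hαc' : 0 < αc := by rw [hαc]; positivity
  have hκ0 : 0 ≤ κ := by rw [hκ]; positivity
  -- derivative of ⟪σ, σ⟫
  have hVder : ∀ t, HasDerivAt (fun s => ⟪σ s, σ s⟫) (2 * ⟪σ t, deriv σ t⟫) t := by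
    intro t
    have := ((hσ t).hasDerivAt).inner ℝ ((hσ t).hasDerivAt)
    refine this.congr_deriv ?_
    rw [real_inner_comm]; ring
  -- ‖σ t‖ ≤ ‖σ 0‖ for t ≥ 0
  have hσle : ∀ t ≥ (0:ℝ), ‖σ t‖ ≤ ‖σ 0‖ := by
    intro t ht
    have hanti : AntitoneOn (fun s => ⟪σ s, σ s⟫) (Ici (0:ℝ)) := by
      apply antitoneOn_of_deriv_nonpos (convex_Ici 0)
      · exact (Differentiable.continuous (fun s => (hVder s).differentiableAt)).continuousOn
      · intro s hs
        exact (hVder s).differentiableAt.differentiableWithinAt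
      · intro s hs
        rw [interior_Ici] at hs
        rw [(hVder s).deriv]
        have := hdesc s (le_of_lt hs)
        nlinarith [norm_nonneg (σ s), mul_nonneg hκ0 (norm_nonneg (σ s))]
    have h2 : ⟪σ t, σ t⟫ ≤ ⟪σ 0, σ 0⟫ := hanti self_mem_Ici (mem_Ici.mpr ht) ht
    rw [real_inner_self_eq_norm_sq, real_inner_self_eq_norm_sq] at h2
    nlinarith [norm_nonneg (σ t), norm_nonneg (σ 0)]
  -- W and its derivative
  set W : ℝ → ℝ := fun t => h (x t) - ⟪σ t, σ t⟫ / (2 * αc) with hWdef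
  set Wd : ℝ → ℝ := fun t => ⟪gradh (x t), deriv x t⟫ - 2 * ⟪σ t, deriv σ t⟫ / (2 * αc) with hWddef
  have hhx : ∀ t, HasDerivAt (fun s => h (x s)) ⟪gradh (x t), deriv x t⟫ t := by
    intro t
    exact (hgrad (x t)).comp_hasDerivAt t (hx t).hasDerivAt
  have hW : ∀ t, HasDerivAt W (Wd t) t := by
    intro t
    exact (hhx t).sub ((hVder t).div_const (2 * αc))
  -- key differential inequality
  have hkey : ∀ t ≥ (0:ℝ), 0 ≤ α * W t + Wd t := by
    intro t ht
    have hgs : ⟪gradh (x t), σ t⟫ ≥ -(η * ‖σ t‖) := by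
      have h1 := abs_real_inner_le_norm (gradh (x t)) (σ t)
      have h2 := hgradbd (x t)
      have h3 := abs_le.mp h1
      nlinarith [norm_nonneg (σ t), norm_nonneg (gradh (x t))]
    have hcbf := hCBF (x t)
    have hd := hdesc t ht
    have hle := hσle t ht
    have hdynt : deriv x t = σ t + v (x t) := hdyn t ht
    have hinner : ⟪gradh (x t), deriv x t⟫ = ⟪gradh (x t), σ t⟫ + ⟪gradh (x t), v (x t)⟫ := by
      rw [hdynt, inner_add_right]
    have hss : ⟪σ t, σ t⟫ = ‖σ t‖^2 := real_inner_self_eq_norm_sq (σ t)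
    rw [hκ] at hd
    have key : 0 ≤ αc * (α * W t + Wd t) := by
      simp only [hWdef, hWddef]
      rw [hinner, hss]
      have hαc0 : αc ≠ 0 := ne_of_gt hαc'
      have e1 : αc * (‖σ t‖^2 / (2 * αc)) = ‖σ t‖^2 / 2 := by field_simp
      have e2 : αc * (2 * ⟪σ t, deriv σ t⟫ / (2 * αc)) = ⟪σ t, deriv σ t⟫ := by
        field_simp
      have expand : αc * (α * (h (x t) - ‖σ t‖^2 / (2 * αc)) +
          (⟪gradh (x t), σ t⟫ + ⟪gradh (x t), v (x t)⟫ - 2 * ⟪σ t, deriv σ t⟫ / (2 * αc)))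
          = α * (αc * h (x t)) - α * (αc * (‖σ t‖^2 / (2 * αc)))
            + αc * ⟪gradh (x t), σ t⟫ + αc * ⟪gradh (x t), v (x t)⟫
            - αc * (2 * ⟪σ t, deriv σ t⟫ / (2 * αc)) := by ring
      rw [expand, e1, e2]
      have p1 : αc * (-(η * ‖σ t‖)) ≤ αc * ⟪gradh (x t), σ t⟫ :=
        mul_le_mul_of_nonneg_left hgs hαc'.le
      have p2 : αc * (-α * h (x t)) ≤ αc * ⟪gradh (x t), v (x t)⟫ :=
        mul_le_mul_of_nonneg_left hcbf hαc'.le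
      have p4 : ‖σ t‖ * ‖σ t‖ ≤ ‖σ 0‖ * ‖σ t‖ :=
        mul_le_mul_of_nonneg_right hle (norm_nonneg _)
      have p5 : α / 2 * (‖σ t‖ * ‖σ t‖) ≤ α / 2 * (‖σ 0‖ * ‖σ t‖) :=
        mul_le_mul_of_nonneg_left p4 (by positivity)
      nlinarith [p1, p2, p5, hd]
    have : αc * 0 ≤ αc * (α * W t + Wd t) := by linarith
    exact le_of_mul_le_mul_left this hαc'
  -- monotone e^{αt} W
  have hG : ∀ t, HasDerivAt (fun s => exp (α * s) * W s)
      (α * exp (α * t) * W t + exp (α * t) * Wd t) t := by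
    intro t
    have h0' : HasDerivAt (fun s : ℝ => α * s) α t := by
      simpa using (hasDerivAt_id t).const_mul α
    have h1 := h0'.exp
    have := h1.mul (hW t)
    refine this.congr_deriv ?_; ring
  have hmono : MonotoneOn (fun s => exp (α * s) * W s) (Ici (0:ℝ)) := by
    apply monotoneOn_of_deriv_nonneg (convex_Ici 0)
    · exact (Differentiable.continuous (fun s => (hG s).differentiableAt)).continuousOn
    · intro s hs; exact (hG s).differentiableAt.differentiableWithinAt
    · intro s hs
      rw [interior_Ici] at hs
      rw [(hG s).deriv]
      have hk := hkey s (le_of_lt hs)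
      have hexp : (0:ℝ) ≤ exp (α * s) := (exp_pos _).le
      have := mul_nonneg hexp hk
      nlinarith [this]
  -- W 0 > 0
  have hW0 : 0 < W 0 := by
    simp only [hWdef]
    rw [real_inner_self_eq_norm_sq]
    have hlt : ‖σ 0‖^2 / (2 * αc) < h (x 0) := by
      rw [div_lt_iff₀ (by positivity)]
      have he : 2 * αc * h (x 0) = ‖σ 0‖^2 + β := by
        rw [hαc]; field_simp
      nlinarith
    linarith
  -- conclude
  intro t ht
  have hWt : 0 < W t := by
    have h1 := hmono (self_mem_Ici) (mem_Ici.mpr ht) ht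
    simp only at h1
    rw [mul_zero, exp_zero, one_mul] at h1
    have hexp : 0 < exp (α * t) := exp_pos _
    have hpos : 0 < exp (α * t) * W t := lt_of_lt_of_le hW0 h1
    by_contra hc
    push_neg at hc
    nlinarith [hpos, hexp, hc]
  have hss : ⟪σ t, σ t⟫ = ‖σ t‖^2 := real_inner_self_eq_norm_sq (σ t)
  constructor
  · simp only [hWdef] at hWt
    rw [hss] at hWt
    linarith
  · positivity
end

section
/- Let E be a real inner product space, let h : E → ℝ be differentiable with gradient ∇h, let v : E → E, and let α > 0, η > 0, γ > 0, ε > 0 with ε ≤ αγ/η, and suppose ‖∇h(y)‖ ≤ η and ⟨∇h(y), v(y)⟩ ≥ −α h(y) for all y ∈ E. Let τ ≥ 0, let x : ℝ → E be differentiable and ξ : ℝ → E be such that x′(t) = v(x(t)) + ξ(t) and ‖ξ(t)‖ ≤ ε for all t ≥ τ. If h(x(τ)) + γ ≥ 0, then h(x(t)) + γ ≥ 0 for all t ≥ τ. -/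
open RealInnerProductSpace

/-- Second part of Theorem 2: on the real sliding manifold, where `x′ = v(x) + ξ` with
`‖ξ‖ ≤ ε ≤ αγ/η`, the trajectory remains in the inflated safe set `C_γ = {h + γ ≥ 0}`. -/
theorem stmt13 {E : Type*} [NormedAddCommGroup E] [InnerProductSpace ℝ E]
    (h : E → ℝ) (gradh : E → E) (hgrad : ∀ y, HasFDerivAt h (innerSL ℝ (gradh y)) y)
    (v : E → E) (α η γ ε : ℝ) (hα : 0 < α) (hη : 0 < η) (hγ : 0 < γ) (hε : 0 < ε)
    (hεγ : ε ≤ α * γ / η)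
    (hgradbd : ∀ y, ‖gradh y‖ ≤ η)
    (hCBF : ∀ y, ⟪gradh y, v y⟫ ≥ -α * h y)
    (τ : ℝ) (hτ : 0 ≤ τ) (x : ℝ → E) (hx : Differentiable ℝ x) (ξ : ℝ → E)
    (hdyn : ∀ t ≥ τ, deriv x t = v (x t) + ξ t)
    (hξ : ∀ t ≥ τ, ‖ξ t‖ ≤ ε)
    (h0 : h (x τ) + γ ≥ 0) :
    ∀ t ≥ τ, h (x t) + γ ≥ 0 := by
  intro t ht
  set g : ℝ → ℝ := fun u => (h (x u) + γ) * Real.exp (α * u) with hg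
  have key : ∀ s : ℝ, HasDerivAt g
      ((⟪gradh (x s), deriv x s⟫) * Real.exp (α * s)
        + (h (x s) + γ) * (α * Real.exp (α * s))) s := by
    intro s
    have h1 : HasDerivAt (fun u => h (x u) + γ) (⟪gradh (x s), deriv x s⟫) s := by
      have := (hgrad (x s)).comp_hasDerivAt s (hx s).hasDerivAt
      simpa using this.add_const γ
    have h2 : HasDerivAt (fun u : ℝ => Real.exp (α * u)) (α * Real.exp (α * s)) s := by
      have := (Real.hasDerivAt_exp (α * s)).comp s ((hasDerivAt_id s).const_mul α)
      exact this.congr_deriv (by ring)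
    exact h1.mul h2
  have mono : MonotoneOn g (Set.Ici τ) := by
    apply monotoneOn_of_deriv_nonneg (convex_Ici τ)
    · exact fun s _ => ((key s).differentiableAt).continuousAt.continuousWithinAt
    · intro s _
      exact ((key s).differentiableAt).differentiableWithinAt
    · intro s hs
      have hsτ : τ ≤ s := le_of_lt (by simpa using hs)
      rw [(key s).deriv, hdyn s hsτ]
      have hep : 0 < Real.exp (α * s) := Real.exp_pos _
      have hinner : ⟪gradh (x s), v (x s) + ξ s⟫ ≥ -α * (h (x s) + γ) := by
        rw [inner_add_right]
        have hcbf := hCBF (x s)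
        have hcs : ⟪gradh (x s), ξ s⟫ ≥ -(η * ε) := by
          have h1 : |⟪gradh (x s), ξ s⟫| ≤ ‖gradh (x s)‖ * ‖ξ s‖ :=
            abs_real_inner_le_norm _ _
          have h2 : ‖gradh (x s)‖ * ‖ξ s‖ ≤ η * ε :=
            mul_le_mul (hgradbd _) (hξ s hsτ) (norm_nonneg _) hη.le
          nlinarith [neg_abs_le (⟪gradh (x s), ξ s⟫)]
        have hηε : η * ε ≤ α * γ := by
          rw [le_div_iff₀ hη] at hεγ
          linarith
        nlinarith
      nlinarith
  have hgτ : 0 ≤ g τ := mul_nonneg h0 (Real.exp_pos _).le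
  have hgt : g τ ≤ g t := mono (Set.mem_Ici.2 le_rfl) (Set.mem_Ici.2 ht) ht
  have : 0 ≤ (h (x t) + γ) * Real.exp (α * t) := le_trans hgτ hgt
  exact (mul_nonneg_iff_of_pos_right (Real.exp_pos _)).mp this
end

section
/- Let E be a real inner product space and let h : E → ℝ be differentiable with gradient ∇h. Let v : E → E, and let α > 0, η ≥ 0, γ > 0 be such that ‖∇h(y)‖ ≤ η and ⟨∇h(y), v(y)⟩ ≥ −α h(y) for all y ∈ E. Let x, σ : ℝ → E be differentiable with x′(t) = σ(t) + v(x(t)) for all t ≥ 0, let α_c > 0 satisfy −(1/2)‖σ(0)‖² + α_c (h(x(0)) + γ) > 0, let κ ≥ (α/2)‖σ(0)‖ + α_c η, and suppose ⟨σ(t), σ′(t)⟩ ≤ −κ ‖σ(t)‖ for all t ≥ 0. Then h(x(t)) + γ ≥ ‖σ(t)‖²/(2 α_c) ≥ 0 for all t ≥ 0. -/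
open RealInnerProductSpace

/-- First part of Theorem 2: safety during the reaching phase with respect to the inflated
safe set `C_γ = {h + γ ≥ 0}`: `h(x(t)) + γ ≥ ‖σ(t)‖²/(2 α_c) ≥ 0` for all `t ≥ 0`. -/
theorem stmt14 {E : Type*} [NormedAddCommGroup E] [InnerProductSpace ℝ E]
    (h : E → ℝ) (gradh : E → E) (hgrad : ∀ y, HasFDerivAt h (innerSL ℝ (gradh y)) y)
    (v : E → E) (α η γ : ℝ) (hα : 0 < α) (hη : 0 ≤ η) (hγ : 0 < γ)
    (hgradbd : ∀ y, ‖gradh y‖ ≤ η)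
    (hCBF : ∀ y, ⟪gradh y, v y⟫ ≥ -α * h y)
    (x σ : ℝ → E) (hx : Differentiable ℝ x) (hσ : Differentiable ℝ σ)
    (hdyn : ∀ t ≥ (0 : ℝ), deriv x t = σ t + v (x t))
    (αc : ℝ) (hαc : 0 < αc)
    (h0 : -(1 / 2) * ‖σ 0‖ ^ 2 + αc * (h (x 0) + γ) > 0)
    (κ : ℝ) (hκ : κ ≥ α / 2 * ‖σ 0‖ + αc * η)
    (hdesc : ∀ t ≥ (0 : ℝ), ⟪σ t, deriv σ t⟫ ≤ -κ * ‖σ t‖) :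
    ∀ t ≥ (0 : ℝ), h (x t) + γ ≥ ‖σ t‖ ^ 2 / (2 * αc) ∧ ‖σ t‖ ^ 2 / (2 * αc) ≥ 0 := by
  -- derivative of ‖σ‖²
  have hVd : ∀ t : ℝ, HasDerivAt (fun s => ‖σ s‖ ^ 2) (2 * ⟪σ t, deriv σ t⟫) t := by
    intro t
    have h1 := (hσ t).hasDerivAt.inner ℝ (hσ t).hasDerivAt
    simp only [real_inner_self_eq_norm_sq] at h1
    refine h1.congr_deriv ?_
    rw [real_inner_comm (deriv σ t)]
    ring
  -- derivative of h ∘ x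
  have hhxd : ∀ t : ℝ, HasDerivAt (fun s => h (x s)) ⟪gradh (x t), deriv x t⟫ t := by
    intro t
    have := (hgrad (x t)).comp_hasDerivAt t (hx t).hasDerivAt
    exact this
  have hκ0 : 0 ≤ κ := le_trans (by positivity) hκ
  -- ‖σ t‖ ≤ ‖σ 0‖ on [0, ∞)
  have hσmono : ∀ t ≥ (0 : ℝ), ‖σ t‖ ≤ ‖σ 0‖ := by
    intro t ht
    have hanti : AntitoneOn (fun s => ‖σ s‖ ^ 2) (Set.Ici (0 : ℝ)) := by
      apply antitoneOn_of_deriv_nonpos (convex_Ici 0)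
      · exact (Continuous.comp continuous_norm hσ.continuous).pow 2 |>.continuousOn
      · intro s _
        exact (hVd s).differentiableAt.differentiableWithinAt
      · intro s hs
        rw [interior_Ici] at hs
        rw [(hVd s).deriv]
        have h2 := hdesc s (le_of_lt hs)
        nlinarith [norm_nonneg (σ s), mul_nonneg hκ0 (norm_nonneg (σ s))]
    have h2 := hanti (Set.self_mem_Ici) (Set.mem_Ici.mpr ht) ht
    simp only at h2
    exact le_of_pow_le_pow_left₀ two_ne_zero (norm_nonneg (σ 0)) h2
  -- the Lyapunov-like function F t = exp(α t) * h_c(t)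
  set hc : ℝ → ℝ := fun s => -(1 / 2) * ‖σ s‖ ^ 2 + αc * (h (x s) + γ) with hhc
  set F : ℝ → ℝ := fun s => Real.exp (α * s) * hc s with hF
  have hhcd : ∀ t : ℝ, HasDerivAt hc
      (-(1 / 2) * (2 * ⟪σ t, deriv σ t⟫) + αc * ⟪gradh (x t), deriv x t⟫) t := by
    intro t
    exact (((hVd t).const_mul (-(1 / 2))).add
      ((((hhxd t).add_const γ)).const_mul αc))
  have hFd : ∀ t : ℝ, HasDerivAt F
      (Real.exp (α * t) * (α * hc t +
        (-(1 / 2) * (2 * ⟪σ t, deriv σ t⟫) + αc * ⟪gradh (x t), deriv x t⟫))) t := by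
    intro t
    have he : HasDerivAt (fun s : ℝ => Real.exp (α * s)) (α * Real.exp (α * t)) t := by
      exact ((Real.hasDerivAt_exp (α * t)).comp t
        ((hasDerivAt_id t).const_mul α)).congr_deriv (by rw [mul_one, mul_comm])
    have := he.mul (hhcd t)
    refine this.congr_deriv ?_
    ring
  -- F is monotone on [0, ∞)
  have hFmono : MonotoneOn F (Set.Ici (0 : ℝ)) := by
    apply monotoneOn_of_deriv_nonneg (convex_Ici 0)
    · exact (fun t _ => (hFd t).differentiableAt.continuousAt.continuousWithinAt)
    · intro t _
      exact (hFd t).differentiableAt.differentiableWithinAt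
    · intro t ht
      rw [interior_Ici] at ht
      have ht' : (0 : ℝ) ≤ t := le_of_lt ht
      rw [(hFd t).deriv]
      apply mul_nonneg (Real.exp_nonneg _)
      -- core inequality
      have hA := hdesc t ht'
      have hdynt := hdyn t ht'
      rw [hdynt, inner_add_right]
      have hB : ⟪gradh (x t), σ t⟫ ≥ -(η * ‖σ t‖) := by
        have := abs_real_inner_le_norm (gradh (x t)) (σ t)
        have h3 := hgradbd (x t)
        have := neg_abs_le ⟪gradh (x t), σ t⟫
        nlinarith [norm_nonneg (σ t)]
      have hC := hCBF (x t)
      have hs0 := hσmono t ht'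
      have hsnn := norm_nonneg (σ t)
      have hκs : κ * ‖σ t‖ ≥ (α / 2 * ‖σ 0‖ + αc * η) * ‖σ t‖ :=
        mul_le_mul_of_nonneg_right hκ hsnn
      simp only [hhc]
      nlinarith [mul_nonneg (mul_nonneg (le_of_lt hα) hsnn) (sub_nonneg.mpr hs0),
        mul_le_mul_of_nonneg_left hC (le_of_lt hαc),
        mul_le_mul_of_nonneg_left hB (le_of_lt hαc),
        mul_pos (mul_pos hα hαc) hγ]
  -- conclude
  intro t ht
  have hF0 : F 0 = hc 0 := by simp [hF]
  have hle : F 0 ≤ F t := hFmono Set.self_mem_Ici (Set.mem_Ici.mpr ht) ht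
  have hhc0 : 0 < hc 0 := h0
  have hFt : 0 < F t := by rw [hF0] at hle; linarith
  have hhct : 0 < hc t := by
    by_contra hcon
    push_neg at hcon
    have h4 : Real.exp (α * t) * hc t ≤ 0 :=
      mul_nonpos_of_nonneg_of_nonpos (Real.exp_pos _).le hcon
    simp only [hF] at hFt
    linarith
  have h2αc : 0 < 2 * αc := by linarith
  constructor
  · rw [ge_iff_le, div_le_iff₀ h2αc]
    simp only [hhc] at hhct
    nlinarith
  · positivity
end

section
/- Let E be a real inner product space and let h : E → ℝ be differentiable with gradient ∇h. Let v : E → E, and let α > 0, η ≥ 0, β > 0 be such that ‖∇h(y)‖ ≤ η and ⟨∇h(y), v(y)⟩ ≥ −α h(y) for all y ∈ E. Let x, σ : ℝ → E be differentiable with x′(t) = σ(t) + v(x(t)) for all t ≥ 0, suppose h(x(0)) > 0, set α_c = (‖σ(0)‖² + β)/(2 h(x(0))) and κ = (α/2)‖σ(0)‖ + α_c η, assume κ > 0, and suppose ⟨σ(t), σ′(t)⟩ ≤ −κ ‖σ(t)‖ for all t ≥ 0. Then (i) h(x(t)) ≥ 0 for all t ≥ 0, and (ii) σ(t) = 0,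 and hence x′(t) = v(x(t)), for all t ≥ √2 ‖σ(0)‖ / κ. -/
open RealInnerProductSpace

/-- Corollary 1: the closed-loop trajectory never leaves the safe set `{h ≥ 0}` and reaches
the safe sliding domain in finite time `T = √2 ‖σ(0)‖ / κ`, after which `x′ = v(x)`. -/
theorem stmt15 {E : Type*} [NormedAddCommGroup E] [InnerProductSpace ℝ E]
    (h : E → ℝ) (gradh : E → E) (hgrad : ∀ y, HasFDerivAt h (innerSL ℝ (gradh y)) y)
    (v : E → E) (α η β : ℝ) (hα : 0 < α) (hη : 0 ≤ η) (hβ : 0 < β)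
    (hgradbd : ∀ y, ‖gradh y‖ ≤ η)
    (hCBF : ∀ y, ⟪gradh y, v y⟫ ≥ -α * h y)
    (x σ : ℝ → E) (hx : Differentiable ℝ x) (hσ : Differentiable ℝ σ)
    (hdyn : ∀ t ≥ (0 : ℝ), deriv x t = σ t + v (x t))
    (h0 : h (x 0) > 0)
    (αc κ : ℝ) (hαc : αc = (‖σ 0‖ ^ 2 + β) / (2 * h (x 0)))
    (hκdef : κ = α / 2 * ‖σ 0‖ + αc * η) (hκ : 0 < κ)
    (hdesc : ∀ t ≥ (0 : ℝ), ⟪σ t, deriv σ t⟫ ≤ -κ * ‖σ t‖) :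
    (∀ t ≥ (0 : ℝ), h (x t) ≥ 0) ∧
      (∀ t ≥ Real.sqrt 2 * ‖σ 0‖ / κ, σ t = 0 ∧ deriv x t = v (x t)) := by
  have hαc0 : 0 < αc := by rw [hαc]; positivity
  -- derivative of V t = ‖σ t‖ ^ 2
  have hVd : ∀ t : ℝ, HasDerivAt (fun t => ‖σ t‖ ^ 2) (2 * ⟪σ t, deriv σ t⟫) t := by
    intro t
    have := ((hσ t).hasDerivAt.inner ℝ (hσ t).hasDerivAt)
    have heq : (fun t => ‖σ t‖ ^ 2) = fun t => ⟪σ t, σ t⟫ := by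
      funext s; rw [real_inner_self_eq_norm_sq]
    rw [heq]
    exact this.congr_deriv (by rw [real_inner_comm]; ring)
  -- V is antitone on Ici 0
  have hVanti : AntitoneOn (fun t => ‖σ t‖ ^ 2) (Set.Ici (0:ℝ)) := by
    apply antitoneOn_of_deriv_nonpos (convex_Ici 0)
    · exact (hσ.continuous.norm.pow 2).continuousOn
    · intro t _; exact (hVd t).differentiableAt.differentiableWithinAt
    · intro t ht
      rw [interior_Ici] at ht
      rw [(hVd t).deriv]
      have := hdesc t (le_of_lt ht)
      nlinarith [norm_nonneg (σ t), hκ.le]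
  have hnormle : ∀ t ≥ (0:ℝ), ‖σ t‖ ≤ ‖σ 0‖ := by
    intro t ht
    have := hVanti (Set.self_mem_Ici) ht ht
    exact (abs_le_of_sq_le_sq' this (norm_nonneg _)).2
  -- derivative of h ∘ x
  have hhd : ∀ t : ℝ, HasDerivAt (fun t => h (x t)) ⟪gradh (x t), deriv x t⟫ t := by
    intro t
    have := (hgrad (x t)).comp_hasDerivAt t (hx t).hasDerivAt
    simp at this; exact this
  -- Part (i): safety via the barrier H = h(x) - ‖σ‖²/(2αc)
  have parti : ∀ t ≥ (0:ℝ), h (x t) ≥ 0 := by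
    intro t ht
    set G : ℝ → ℝ := fun t => Real.exp (α * t) * (h (x t) - ‖σ t‖ ^ 2 / (2 * αc)) with hG
    have hGd : ∀ s : ℝ, HasDerivAt G
        (α * Real.exp (α * s) * (h (x s) - ‖σ s‖ ^ 2 / (2 * αc))
          + Real.exp (α * s) * (⟪gradh (x s), deriv x s⟫ - 2 * ⟪σ s, deriv σ s⟫ / (2 * αc))) s := by
      intro s
      have he : HasDerivAt (fun t => Real.exp (α * t)) (Real.exp (α * s) * α) s := by
        simpa using ((hasDerivAt_id s).const_mul α).exp
      have hH : HasDerivAt (fun t => h (x t) - ‖σ t‖ ^ 2 / (2 * αc))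
          (⟪gradh (x s), deriv x s⟫ - 2 * ⟪σ s, deriv σ s⟫ / (2 * αc)) s :=
        (hhd s).sub ((hVd s).div_const _)
      have := he.mul hH
      exact this.congr_deriv (by ring)
    have hGmono : MonotoneOn G (Set.Ici (0:ℝ)) := by
      apply monotoneOn_of_deriv_nonneg (convex_Ici 0)
      · exact fun s _ => ((hGd s).continuousAt).continuousWithinAt
      · intro s _; exact (hGd s).differentiableAt.differentiableWithinAt
      · intro s hs
        rw [interior_Ici] at hs
        rw [(hGd s).deriv]
        have hs0 : (0:ℝ) ≤ s := hs.le
        have hd1 : deriv x s = σ s + v (x s) := hdyn s hs0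
        have h1 : ⟪gradh (x s), deriv x s⟫ = ⟪gradh (x s), σ s⟫ + ⟪gradh (x s), v (x s)⟫ := by
          rw [hd1, inner_add_right]
        have h2 : ⟪gradh (x s), v (x s)⟫ ≥ -α * h (x s) := hCBF (x s)
        have h3 : ⟪gradh (x s), σ s⟫ ≥ -(η * ‖σ s‖) := by
          have h31 := abs_real_inner_le_norm (gradh (x s)) (σ s)
          have hb := hgradbd (x s)
          nlinarith [norm_nonneg (σ s), neg_abs_le ⟪gradh (x s), σ s⟫]
        have h4 : ⟪σ s, deriv σ s⟫ ≤ -κ * ‖σ s‖ := hdesc s hs0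
        have h5 : ‖σ s‖ ≤ ‖σ 0‖ := hnormle s hs0
        have hexp : 0 < Real.exp (α * s) := Real.exp_pos _
        have hI' : -(α * ‖σ s‖ ^ 2) - 2 * ⟪σ s, deriv σ s⟫
            ≥ α * ‖σ s‖ * (‖σ 0‖ - ‖σ s‖) + 2 * αc * η * ‖σ s‖ := by
          rw [hκdef] at h4
          nlinarith [h4]
        have t1 : (α * ‖σ s‖ * (‖σ 0‖ - ‖σ s‖) + 2 * αc * η * ‖σ s‖) / (2 * αc)
            ≤ (-(α * ‖σ s‖ ^ 2) - 2 * ⟪σ s, deriv σ s⟫) / (2 * αc) := by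
          gcongr
        have t2 : (α * ‖σ s‖ * (‖σ 0‖ - ‖σ s‖) + 2 * αc * η * ‖σ s‖) / (2 * αc)
            = (α * ‖σ s‖ * (‖σ 0‖ - ‖σ s‖)) / (2 * αc) + η * ‖σ s‖ := by
          field_simp
        have t3 : 0 ≤ (α * ‖σ s‖ * (‖σ 0‖ - ‖σ s‖)) / (2 * αc) := by
          apply div_nonneg _ (by positivity)
          exact mul_nonneg (mul_nonneg hα.le (norm_nonneg _)) (by linarith)
        have key : α * (h (x s) - ‖σ s‖ ^ 2 / (2 * αc))
            + (⟪gradh (x s), deriv x s⟫ - 2 * ⟪σ s, deriv σ s⟫ / (2 * αc)) ≥ 0 := by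
          have e1 : α * (h (x s) - ‖σ s‖ ^ 2 / (2 * αc))
              + (⟪gradh (x s), σ s⟫ + ⟪gradh (x s), v (x s)⟫ - 2 * ⟪σ s, deriv σ s⟫ / (2 * αc))
              = ⟪gradh (x s), σ s⟫ + (α * h (x s) + ⟪gradh (x s), v (x s)⟫)
                + (-(α * ‖σ s‖ ^ 2) - 2 * ⟪σ s, deriv σ s⟫) / (2 * αc) := by
            ring
          rw [h1, e1]
          linarith [t1, t2, t3, h2, h3]
        nlinarith [mul_nonneg hexp.le key]
    have hGpos : G 0 > 0 := by
      have h2αc : 2 * αc * h (x 0) = ‖σ 0‖ ^ 2 + β := by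
        rw [hαc]; field_simp
      have hlt : ‖σ 0‖ ^ 2 / (2 * αc) < h (x 0) := by
        rw [div_lt_iff₀ (by positivity)]
        nlinarith [h2αc, hβ]
      have : G 0 = h (x 0) - ‖σ 0‖ ^ 2 / (2 * αc) := by simp [hG]
      linarith
    have hmono := hGmono Set.self_mem_Ici ht ht
    have hGt : G t > 0 := lt_of_lt_of_le hGpos hmono
    have hexp : 0 < Real.exp (α * t) := Real.exp_pos _
    have h6 : 0 < h (x t) - ‖σ t‖ ^ 2 / (2 * αc) := by
      by_contra hc
      push_neg at hc
      have : G t ≤ 0 := mul_nonpos_of_nonneg_of_nonpos hexp.le hc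
      linarith
    have h7 : 0 ≤ ‖σ t‖ ^ 2 / (2 * αc) := by positivity
    linarith
  refine ⟨parti, ?_⟩
  -- Part (ii)
  set T := Real.sqrt 2 * ‖σ 0‖ / κ with hT
  have hT0 : 0 ≤ T := by positivity
  have hσzero : ∀ t ≥ (0:ℝ), ‖σ t‖ ^ 2 ≤ 0 → σ t = 0 := by
    intro t _ hle
    have := sq_nonneg ‖σ t‖
    have : ‖σ t‖ ^ 2 = 0 := le_antisymm hle this
    have : ‖σ t‖ = 0 := by nlinarith [norm_nonneg (σ t)]
    simpa using this
  have hσT : σ T = 0 := by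
    by_contra hne
    have hnT : 0 < ‖σ T‖ := norm_pos_iff.mpr hne
    have hpos : ∀ s ∈ Set.Icc (0:ℝ) T, σ s ≠ 0 := by
      intro s hs hzero
      have := hVanti (Set.mem_Ici.2 hs.1) (Set.mem_Ici.2 hT0) hs.2
      simp only [hzero, norm_zero] at this
      simp at this
      exact hne this
    -- derivative of the norm along the trajectory, where nonzero
    have hnd : ∀ s ∈ Set.Ioo (0:ℝ) T,
        HasDerivAt (fun t => ‖σ t‖) (⟪σ s, deriv σ s⟫ / ‖σ s‖) s := by
      intro s hs
      have hsne : σ s ≠ 0 := hpos s ⟨hs.1.le, hs.2.le⟩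
      have hn : 0 < ‖σ s‖ := norm_pos_iff.mpr hsne
      have hfne : ‖σ s‖ ^ 2 ≠ 0 := by positivity
      have hc := (Real.hasDerivAt_sqrt hfne).comp s (hVd s)
      have heq : (Real.sqrt ∘ fun t => ‖σ t‖ ^ 2) = fun t => ‖σ t‖ := by
        funext u
        simp [Function.comp, Real.sqrt_sq (norm_nonneg _)]
      rw [heq] at hc
      refine hc.congr_deriv ?_
      rw [Real.sqrt_sq (norm_nonneg _)]
      field_simp
    have hanti : AntitoneOn (fun t => ‖σ t‖ + κ * t) (Set.Icc (0:ℝ) T) := by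
      apply antitoneOn_of_deriv_nonpos (convex_Icc 0 T)
      · exact (hσ.continuous.norm.add (continuous_const.mul continuous_id)).continuousOn
      · intro s hs
        rw [interior_Icc] at hs
        have hlin : HasDerivAt (fun t : ℝ => κ * t) κ s := by
          simpa using (hasDerivAt_id s).const_mul κ
        exact ((hnd s hs).add hlin).differentiableAt.differentiableWithinAt
      · intro s hs
        rw [interior_Icc] at hs
        have hlin : HasDerivAt (fun t : ℝ => κ * t) κ s := by
          simpa using (hasDerivAt_id s).const_mul κ
        have hder := ((hnd s hs).add hlin).deriv
        rw [show (fun t => ‖σ t‖ + κ * t) = ((fun t => ‖σ t‖) + fun t => κ * t) from rfl, hder]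
        have hsne : σ s ≠ 0 := hpos s ⟨hs.1.le, hs.2.le⟩
        have hn : 0 < ‖σ s‖ := norm_pos_iff.mpr hsne
        have h4 := hdesc s hs.1.le
        have : ⟪σ s, deriv σ s⟫ / ‖σ s‖ ≤ -κ := by
          rw [div_le_iff₀ hn]
          linarith
        linarith
    have hcomp := hanti (Set.left_mem_Icc.2 hT0) (Set.right_mem_Icc.2 hT0) hT0
    -- ‖σ T‖ + κ T ≤ ‖σ 0‖
    have hκT : κ * T = Real.sqrt 2 * ‖σ 0‖ := by
      rw [hT]
      field_simp
    have hn0 : 0 < ‖σ 0‖ := by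
      by_contra hc
      push_neg at hc
      have : ‖σ T‖ ≤ ‖σ 0‖ := hnormle T hT0
      nlinarith [norm_nonneg (σ 0)]
    have hs2 : (1:ℝ) < Real.sqrt 2 := by
      rw [show (1:ℝ) = Real.sqrt 1 by simp]
      exact Real.sqrt_lt_sqrt (by norm_num) (by norm_num)
    simp only [mul_zero, add_zero] at hcomp
    nlinarith [hcomp, hκT]
  intro t htT
  have htf : (0:ℝ) ≤ t := le_trans hT0 htT
  have hVt := hVanti (Set.mem_Ici.2 hT0) (Set.mem_Ici.2 htf) htT
  simp only [hσT, norm_zero] at hVt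
  simp at hVt
  have hσt : σ t = 0 := by
    apply hσzero t htf
    simpa using hVt
  refine ⟨hσt, ?_⟩
  rw [hdyn t htf, hσt, zero_add]
end

section
/- Let σ : ℝ → ℝⁿ be differentiable, let A : ℝ → Matrix(n,n,ℝ), d : ℝ → ℝⁿ, ρ : ℝ → ℝ, k : ℝ → ℝ, and let μ > −1, κ > 0 be such that for every t ≥ 0: yᵀ A(t) y ≥ μ ‖y‖² for all y ∈ ℝⁿ, ‖d(t)‖ ≤ ρ(t) with ρ(t) ≥ 0, k(t) = (κ + ρ(t))/(1 + μ), and whenever σ(t) ≠ 0, σ′(t) = −k(t) σ(t)/‖σ(t)‖ − k(t) A(t) (σ(t)/‖σ(t)‖) + d(t). Then ⟨σ(t), σ′(t)⟩ ≤ −κ ‖σ(t)‖ for every t ≥ 0 with σ(t) ≠ 0, and σ(t) = 0 for all t ≥ √2 ‖σ(0)‖ / κ. -/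
open Matrix RealInnerProductSpace

private lemma inner_eq_dot {n : ℕ} (x y : EuclideanSpace ℝ (Fin n)) :
    ⟪x, y⟫ = x ⬝ᵥ y := by
  simp [PiLp.inner_apply, dotProduct, RCLike.inner_apply, conj_trivial, mul_comm]

private lemma norm_hasDerivAt {n : ℕ} {σ : ℝ → EuclideanSpace ℝ (Fin n)}
    (hσ : Differentiable ℝ σ) {x : ℝ} (hx : σ x ≠ 0) :
    HasDerivAt (fun t => ‖σ t‖) (⟪σ x, deriv σ x⟫ / ‖σ x‖) x := by
  have hσx : HasDerivAt σ (deriv σ x) x := (hσ x).hasDerivAt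
  have hF : HasDerivAt (fun t => ⟪σ t, σ t⟫) (⟪σ x, deriv σ x⟫ + ⟪deriv σ x, σ x⟫) x :=
    hσx.inner ℝ hσx
  have hn : ‖σ x‖ ≠ 0 := norm_ne_zero_iff.2 hx
  have hFx : (⟪σ x, σ x⟫ : ℝ) ≠ 0 := by
    rw [real_inner_self_eq_norm_sq]
    positivity
  have hs := (Real.hasDerivAt_sqrt hFx).comp x hF
  have heq : (fun t => Real.sqrt ⟪σ t, σ t⟫) = fun t => ‖σ t‖ := by
    funext t
    rw [real_inner_self_eq_norm_sq, Real.sqrt_sq (norm_nonneg _)]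
  have hs' : HasDerivAt (fun t => Real.sqrt ⟪σ t, σ t⟫)
      (1 / (2 * Real.sqrt ⟪σ x, σ x⟫) * (⟪σ x, deriv σ x⟫ + ⟪deriv σ x, σ x⟫)) x := hs
  rw [heq] at hs'
  convert hs' using 1
  rw [real_inner_self_eq_norm_sq, Real.sqrt_sq (norm_nonneg _),
    real_inner_comm (deriv σ x)]
  field_simp
  ring

/-- Trajectory-level content of Theorem 1: along any solution of the closed-loop
sliding-variable dynamics `σ̇ = −k σ/‖σ‖ − k A (σ/‖σ‖) + d` with gain
`k = (κ + ρ)/(1 + μ)`, one has `⟨σ, σ̇⟩ ≤ −κ‖σ‖` wherever `σ ≠ 0`, and `σ` reaches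
zero no later than `T = √2 ‖σ(0)‖ / κ` and stays there. -/
theorem stmt16 {n : ℕ} (σ : ℝ → EuclideanSpace ℝ (Fin n)) (hσ : Differentiable ℝ σ)
    (A : ℝ → Matrix (Fin n) (Fin n) ℝ) (d : ℝ → EuclideanSpace ℝ (Fin n))
    (ρ k : ℝ → ℝ) (μ κ : ℝ) (hμ : μ > -1) (hκ : 0 < κ)
    (hA : ∀ t ≥ (0 : ℝ), ∀ y : EuclideanSpace ℝ (Fin n),
      μ * ‖y‖ ^ 2 ≤ y ⬝ᵥ (A t).mulVec y)
    (hd : ∀ t ≥ (0 : ℝ), ‖d t‖ ≤ ρ t) (hρ : ∀ t ≥ (0 : ℝ), 0 ≤ ρ t)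
    (hk : ∀ t ≥ (0 : ℝ), k t = (κ + ρ t) / (1 + μ))
    (hdyn : ∀ t ≥ (0 : ℝ), σ t ≠ 0 →
      deriv σ t =
        -(k t • (‖σ t‖⁻¹ • σ t))
          - k t • (EuclideanSpace.equiv (Fin n) ℝ).symm ((A t).mulVec (‖σ t‖⁻¹ • σ t))
          + d t) :
    (∀ t ≥ (0 : ℝ), σ t ≠ 0 → ⟪σ t, deriv σ t⟫ ≤ -κ * ‖σ t‖) ∧
      (∀ t ≥ Real.sqrt 2 * ‖σ 0‖ / κ, σ t = 0) := by
  have h1μ : (0:ℝ) < 1 + μ := by linarith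
  -- Part 1
  have part1 : ∀ t ≥ (0 : ℝ), σ t ≠ 0 → ⟪σ t, deriv σ t⟫ ≤ -κ * ‖σ t‖ := by
    intro t ht hne
    have hnorm : (0:ℝ) < ‖σ t‖ := norm_pos_iff.2 hne
    set u : EuclideanSpace ℝ (Fin n) := ‖σ t‖⁻¹ • σ t with hu
    have hun : ‖u‖ = 1 := by
      rw [hu, norm_smul, norm_inv, norm_norm, inv_mul_cancel₀ hnorm.ne']
    have hk0 : 0 ≤ k t := by
      rw [hk t ht]
      exact div_nonneg (by linarith [hρ t ht]) h1μ.le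
    have hσu : σ t = ‖σ t‖ • u := by
      rw [hu, smul_smul, mul_inv_cancel₀ hnorm.ne', one_smul]
    have hAu : μ ≤ u ⬝ᵥ (A t).mulVec u := by
      have := hA t ht u
      rwa [hun, one_pow, mul_one] at this
    have hinA : ⟪σ t, (EuclideanSpace.equiv (Fin n) ℝ).symm ((A t).mulVec u)⟫
        = ‖σ t‖ * (u ⬝ᵥ (A t).mulVec u) := by
      rw [show ((EuclideanSpace.equiv (Fin n) ℝ).symm ((A t).mulVec u))
          = WithLp.toLp 2 ((A t).mulVec u) from rfl]
      rw [inner_eq_dot, WithLp.ofLp_toLp]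
      nth_rewrite 1 [hσu]
      exact smul_dotProduct _ _ _
    have hind : ⟪σ t, d t⟫ ≤ ‖σ t‖ * ρ t :=
      (real_inner_le_norm _ _).trans
        (mul_le_mul_of_nonneg_left (hd t ht) (norm_nonneg _))
    rw [hdyn t ht hne, inner_add_right, inner_sub_right, inner_neg_right]
    simp only [real_inner_smul_right]
    rw [show ‖σ t‖⁻¹ • (σ t).ofLp = u.ofLp from rfl, hinA, real_inner_self_eq_norm_sq,
      show ‖σ t‖⁻¹ * ‖σ t‖ ^ 2 = ‖σ t‖ by field_simp]
    have hkA : k t * (‖σ t‖ * μ) ≤ k t * (‖σ t‖ * (u ⬝ᵥ (A t).mulVec u)) :=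
      mul_le_mul_of_nonneg_left (mul_le_mul_of_nonneg_left hAu hnorm.le) hk0
    have hkval : k t * (1 + μ) = κ + ρ t := by
      rw [hk t ht, div_mul_cancel₀ _ h1μ.ne']
    nlinarith
  refine ⟨part1, ?_⟩
  -- decrease lemma
  have key : ∀ a b : ℝ, 0 ≤ a → a ≤ b → (∀ s ∈ Set.Ioo a b, σ s ≠ 0) →
      ‖σ b‖ + κ * b ≤ ‖σ a‖ + κ * a := by
    intro a b ha hab hne
    set f : ℝ → ℝ := fun t => ‖σ t‖ + κ * t with hf
    have hcont : ContinuousOn f (Set.Icc a b) :=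
      ((hσ.continuous.norm).add (continuous_const.mul continuous_id)).continuousOn
    have hder : ∀ x ∈ interior (Set.Icc a b),
        HasDerivAt f (⟪σ x, deriv σ x⟫ / ‖σ x‖ + κ) x := by
      intro x hx
      rw [interior_Icc] at hx
      have h2 : HasDerivAt (fun t : ℝ => κ * t) κ x := by
        simpa using (hasDerivAt_id x).const_mul κ
      exact (norm_hasDerivAt hσ (hne x hx)).add h2
    have hanti : AntitoneOn f (Set.Icc a b) := by
      apply antitoneOn_of_deriv_nonpos (convex_Icc a b) hcont
        (fun x hx => (hder x hx).differentiableAt.differentiableWithinAt)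
      intro x hx
      rw [(hder x hx).deriv]
      rw [interior_Icc] at hx
      have hx0 : (0:ℝ) ≤ x := ha.trans hx.1.le
      have hnx : σ x ≠ 0 := hne x hx
      have hnp : (0:ℝ) < ‖σ x‖ := norm_pos_iff.2 hnx
      have := part1 x hx0 hnx
      have hdiv : ⟪σ x, deriv σ x⟫ / ‖σ x‖ ≤ -κ := by
        rw [div_le_iff₀ hnp]
        linarith [this]
      linarith
    exact hanti (Set.left_mem_Icc.2 hab) (Set.right_mem_Icc.2 hab) hab
  set T := Real.sqrt 2 * ‖σ 0‖ / κ with hT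
  have hT0 : 0 ≤ T := div_nonneg (by positivity) hκ.le
  have hits : ∃ t0, 0 ≤ t0 ∧ t0 ≤ T ∧ σ t0 = 0 := by
    by_cases h0 : σ 0 = 0
    · exact ⟨0, le_refl 0, hT0, h0⟩
    by_contra hcon
    push_neg at hcon
    have hne : ∀ s ∈ Set.Ioo (0:ℝ) T, σ s ≠ 0 := fun s hs => hcon s hs.1.le hs.2.le
    have hkey := key 0 T le_rfl hT0 hne
    have hTval : κ * T = Real.sqrt 2 * ‖σ 0‖ := by
      rw [hT]; field_simp
    have h2 : (1:ℝ) < Real.sqrt 2 := by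
      rw [show (1:ℝ) = Real.sqrt 1 by simp]
      exact Real.sqrt_lt_sqrt (by norm_num) (by norm_num)
    have hσ0 : 0 < ‖σ 0‖ := norm_pos_iff.2 h0
    nlinarith [norm_nonneg (σ T)]
  obtain ⟨t0, ht00, ht0T, ht0z⟩ := hits
  intro t ht
  by_contra hne
  set S := Set.Icc t0 t ∩ {s | σ s = 0} with hS
  have hSne : S.Nonempty := ⟨t0, ⟨le_rfl, ht0T.trans ht⟩, ht0z⟩
  have hSbdd : BddAbove S := ⟨t, fun s hs => hs.1.2⟩
  have hScl : IsClosed S :=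
    isClosed_Icc.inter (isClosed_eq hσ.continuous continuous_const)
  have hsS : sSup S ∈ S := hScl.csSup_mem hSne hSbdd
  obtain ⟨⟨hst0, hst⟩, hs0⟩ := hsS
  have hslt : sSup S < t := lt_of_le_of_ne hst (fun h => hne (h ▸ hs0))
  have hnz : ∀ x ∈ Set.Ioo (sSup S) t, σ x ≠ 0 := by
    intro x hx hxz
    have hmem : x ∈ S := ⟨⟨hst0.trans hx.1.le, hx.2.le⟩, hxz⟩
    exact absurd (le_csSup hSbdd hmem) (not_le.2 hx.1)
  have hkey := key (sSup S) t (ht00.trans hst0) hslt.le hnz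
  have hpos : 0 < ‖σ t‖ := norm_pos_iff.2 hne
  rw [hs0] at hkey
  simp only [norm_zero, zero_add] at hkey
  nlinarith
end

section
/- Let E be a real inner product space, let τ ≥ 0, ε > 0, μ > −1, ρ ≥ 0, and let σ : ℝ → E be differentiable such that for every t ≥ τ with ε/2 ≤ ‖σ(t)‖ < ε one has ⟨σ(t), σ′(t)⟩ ≤ −(1 + μ) ‖σ(t)‖²/(ε − ‖σ(t)‖) + ρ ‖σ(t)‖. If ‖σ(τ)‖ ≤ ε/2, then ‖σ(t)‖ < ε for all t ≥ τ. -/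
open RealInnerProductSpace

/-- Lemma 1 (barrier-function-based adaptive gain): if, whenever `ε/2 ≤ ‖σ(t)‖ < ε`,
the descent inequality `⟨σ, σ′⟩ ≤ −(1+μ)‖σ‖²/(ε − ‖σ‖) + ρ‖σ‖` holds, then once the
trajectory satisfies `‖σ(τ)‖ ≤ ε/2` it remains in `{‖σ‖ < ε}` for all `t ≥ τ`. -/
theorem stmt17 {E : Type*} [NormedAddCommGroup E] [InnerProductSpace ℝ E]
    (τ ε μ ρ : ℝ) (hτ : 0 ≤ τ) (hε : 0 < ε) (hμ : μ > -1) (hρ : 0 ≤ ρ)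
    (σ : ℝ → E) (hσ : Differentiable ℝ σ)
    (hdesc : ∀ t ≥ τ, ε / 2 ≤ ‖σ t‖ → ‖σ t‖ < ε →
      ⟪σ t, deriv σ t⟫ ≤ -(1 + μ) * ‖σ t‖ ^ 2 / (ε - ‖σ t‖) + ρ * ‖σ t‖)
    (hinit : ‖σ τ‖ ≤ ε / 2) :
    ∀ t ≥ τ, ‖σ t‖ < ε := by
  intro t ht
  by_contra hcon
  push_neg at hcon
  have hμ' : (0:ℝ) < 1 + μ := by linarith
  have hρ1 : (0:ℝ) < ρ + 1 := by linarith
  set d : ℝ := min (ε/2) ((1+μ)*ε/(4*(ρ+1))) with hd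
  have hd0 : 0 < d := lt_min (by linarith) (by positivity)
  have hd2 : d ≤ ε/2 := min_le_left _ _
  have hdle : d ≤ (1+μ)*ε/(4*(ρ+1)) := min_le_right _ _
  set c : ℝ := ε - d with hc
  have hcε2 : ε/2 ≤ c := by simp only [hc]; linarith
  have hcε : c < ε := by simp only [hc]; linarith
  have hc0 : 0 < c := by linarith
  -- key inequality
  have key : ∀ x : ℝ, c ≤ x → x < ε → -(1+μ) * x ^ 2 / (ε - x) + ρ * x ≤ 0 := by
    intro x hcx hxε
    have hεx0 : 0 < ε - x := by linarith
    have hεxd : ε - x ≤ d := by linarith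
    have hx2 : (ε/2)^2 ≤ x^2 := by nlinarith
    have h1 : (1+μ)*(ε/2)^2 / d ≤ (1+μ)*x^2 / (ε - x) :=
      div_le_div₀ (by positivity) (by nlinarith) hεx0 hεxd
    have h2 : (1+μ)*(ε/2)^2 / ((1+μ)*ε/(4*(ρ+1))) ≤ (1+μ)*(ε/2)^2 / d :=
      div_le_div_of_nonneg_left (by positivity) hd0 hdle
    have h3 : (1+μ)*(ε/2)^2 / ((1+μ)*ε/(4*(ρ+1))) = ε*(ρ+1) := by
      field_simp; ring
    have h4 : ρ * x ≤ ε*(ρ+1) := by nlinarith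
    have h5 : ρ * x ≤ (1+μ)*x^2 / (ε - x) := by linarith [h3 ▸ h2]
    have : -(1+μ) * x ^ 2 / (ε - x) = -((1+μ)*x^2/(ε-x)) := by ring
    rw [this]; linarith
  -- V and its derivative
  set V : ℝ → ℝ := fun s => ‖σ s‖^2 with hV
  have hVderiv : ∀ s, HasDerivAt V (2 * ⟪σ s, deriv σ s⟫) s := by
    intro s
    have h := (hσ s).hasDerivAt
    have h2 := h.inner ℝ h
    have heq : (fun u => ⟪σ u, σ u⟫) = V := by
      funext u; simp [hV, real_inner_self_eq_norm_sq]
    rw [heq] at h2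
    exact h2.congr_deriv (by rw [real_inner_comm (deriv σ s) (σ s)]; ring)
  -- first crossing time t₁
  set S : Set ℝ := {s | s ∈ Set.Icc τ t ∧ ε ≤ ‖σ s‖} with hS
  have hSne : S.Nonempty := ⟨t, ⟨ht, le_refl t⟩, hcon⟩
  have hSclosed : IsClosed S :=
    (isClosed_Icc).inter (isClosed_le continuous_const (hσ.continuous.norm))
  have hSbdd : BddBelow S := ⟨τ, fun s hs => hs.1.1⟩
  set t₁ : ℝ := sInf S with ht₁
  have ht₁mem : t₁ ∈ S := hSclosed.csInf_mem hSne hSbdd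
  have ht₁τ : τ ≤ t₁ := ht₁mem.1.1
  have ht₁ε : ε ≤ ‖σ t₁‖ := ht₁mem.2
  have hbefore : ∀ s, τ ≤ s → s < t₁ → ‖σ s‖ < ε := by
    intro s hsτ hst₁
    by_contra h
    push_neg at h
    have : s ∈ S := ⟨⟨hsτ, le_trans (le_of_lt hst₁) ht₁mem.1.2⟩, h⟩
    exact absurd (csInf_le hSbdd this) (not_le.mpr hst₁)
  -- last time below c
  set T : Set ℝ := {s | s ∈ Set.Icc τ t₁ ∧ ‖σ s‖ ≤ c} with hT
  have hTne : T.Nonempty := ⟨τ, ⟨le_refl τ, ht₁τ⟩, le_trans hinit hcε2⟩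
  have hTclosed : IsClosed T :=
    (isClosed_Icc).inter (isClosed_le (hσ.continuous.norm) continuous_const)
  have hTbdd : BddAbove T := ⟨t₁, fun s hs => hs.1.2⟩
  set t₀ : ℝ := sSup T with ht₀
  have ht₀mem : t₀ ∈ T := hTclosed.csSup_mem hTne hTbdd
  have ht₀τ : τ ≤ t₀ := ht₀mem.1.1
  have ht₀t₁ : t₀ ≤ t₁ := ht₀mem.1.2
  have ht₀c : ‖σ t₀‖ ≤ c := ht₀mem.2
  have hafter : ∀ s, t₀ < s → s ≤ t₁ → c < ‖σ s‖ := by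
    intro s hs₀ hs₁
    by_contra h
    push_neg at h
    have : s ∈ T := ⟨⟨le_trans ht₀τ (le_of_lt hs₀), hs₁⟩, h⟩
    exact absurd (le_csSup hTbdd this) (not_le.mpr hs₀)
  -- V antitone on [t₀, t₁]
  have hanti : AntitoneOn V (Set.Icc t₀ t₁) := by
    apply antitoneOn_of_deriv_nonpos (convex_Icc t₀ t₁)
    · exact fun s _ => ((hVderiv s).continuousAt).continuousWithinAt
    · intro s hs
      exact ((hVderiv s).differentiableAt).differentiableWithinAt
    · intro s hs
      rw [interior_Icc] at hs
      rw [(hVderiv s).deriv]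
      have hsτ : τ ≤ s := le_trans ht₀τ (le_of_lt hs.1)
      have hlt : ‖σ s‖ < ε := hbefore s hsτ hs.2
      have hgt : c < ‖σ s‖ := hafter s hs.1 (le_of_lt hs.2)
      have hdd := hdesc s hsτ (le_trans hcε2 (le_of_lt hgt)) hlt
      have hk := key ‖σ s‖ (le_of_lt hgt) hlt
      linarith
  have hfin := hanti ⟨le_refl t₀, ht₀t₁⟩ ⟨ht₀t₁, le_refl t₁⟩ ht₀t₁
  have h1 : ε^2 ≤ ‖σ t₁‖^2 := pow_le_pow_left₀ hε.le ht₁ε 2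
  have h2 : ‖σ t₀‖^2 ≤ c^2 := pow_le_pow_left₀ (norm_nonneg _) ht₀c 2
  simp only [hV] at hfin
  have hce : c^2 < ε^2 := by nlinarith
  linarith
end
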